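/- arXiv:2308.14314 — 2 statements merged into one kernel-verified Lean document; each statement's English description precedes it below -/
import Mathlib

section
/- The NSA iterates satisfy liminf_{k→∞} k³·(log k)·(log log k)·‖∇f(y_k)‖² = 0. -/
open InnerProductSpace Set Filter Real Topology

local notation "⟪" x ", " y "⟫" => @inner ℝ _ _ x y

section NSAAux



variable {E : Type*} [NormedAddCommGroup E] [InnerProductSpace ℝ E] [CompleteSpace E]

lemma line_hasDerivAt (f : E → ℝ) (hdiff : Differentiable ℝ f) (a u : E) (t : ℝ) :
    HasDerivAt (fun s : ℝ => f (a + s • u)) ⟪gradient f (a + t • u), u⟫ t := by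
  have h1 : HasFDerivAt f (toDual ℝ E (gradient f (a + t • u))) (a + t • u) :=
    (hdiff _).hasGradientAt.hasFDerivAt
  have h2 : HasDerivAt (fun s : ℝ => a + s • u) u t := by
    simpa using ((hasDerivAt_id t).smul_const u).const_add a
  exact h1.comp_hasDerivAt t h2

lemma convex_grad_ineq (f : E → ℝ) (hconv : ConvexOn ℝ Set.univ f)
    (hdiff : Differentiable ℝ f) (a b : E) :
    f a + ⟪gradient f a, b - a⟫ ≤ f b := by
  set u := b - a
  have hd : HasDerivAt (fun s : ℝ => f (a + s • u)) ⟪gradient f a, u⟫ 0 := by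
    simpa using line_hasDerivAt f hdiff a u 0
  have hslope : Tendsto (slope (fun s : ℝ => f (a + s • u)) 0) (𝓝[>] 0)
      (𝓝 ⟪gradient f a, u⟫) :=
    (hasDerivAt_iff_tendsto_slope.1 hd).mono_left
      (nhdsWithin_mono 0 (fun x hx => ne_of_gt hx))
  have hev : ∀ᶠ t in 𝓝[>] (0:ℝ), slope (fun s : ℝ => f (a + s • u)) 0 t ≤ f b - f a := by
    filter_upwards [Ioo_mem_nhdsGT_of_mem (by norm_num : (0:ℝ) ∈ Ico 0 1)] with t ht
    have ht0 : 0 < t := ht.1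
    have ht1 : t < 1 := ht.2
    have hcx := hconv.2 (mem_univ a) (mem_univ b) (by linarith : (0:ℝ) ≤ 1 - t)
      (le_of_lt ht0) (by ring)
    have hab : a + t • u = (1 - t) • a + t • b := by
      simp only [u]; module
    rw [slope_def_field]
    have : f (a + t • u) ≤ (1 - t) * f a + t * f b := by rw [hab]; simpa using hcx
    simp only [sub_zero, zero_smul, add_zero]
    rw [div_le_iff₀ ht0]
    nlinarith
  have := le_of_tendsto hslope hev
  linarith

lemma descent_lemma (f : E → ℝ) (hdiff : Differentiable ℝ f) (L : ℝ) (hL : 0 < L)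
    (hlip : ∀ x x' : E, ‖gradient f x - gradient f x'‖ ≤ L * ‖x - x'‖) (a b : E) :
    f b ≤ f a + ⟪gradient f a, b - a⟫ + L / 2 * ‖b - a‖ ^ 2 := by
  set u := b - a with hu
  set ψ : ℝ → ℝ := fun t => f (a + t • u) - t * ⟪gradient f a, u⟫ - L / 2 * ‖u‖ ^ 2 * t ^ 2
    with hψ
  have hder : ∀ t : ℝ, HasDerivAt ψ
      (⟪gradient f (a + t • u), u⟫ - ⟪gradient f a, u⟫ - L * ‖u‖ ^ 2 * t) t := by
    intro t
    have h1 := line_hasDerivAt f hdiff a u t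
    have h2 : HasDerivAt (fun t : ℝ => t * ⟪gradient f a, u⟫) ⟪gradient f a, u⟫ t := by
      simpa using (hasDerivAt_id t).mul_const ⟪gradient f a, u⟫
    have h3 : HasDerivAt (fun t : ℝ => L / 2 * ‖u‖ ^ 2 * t ^ 2) (L * ‖u‖ ^ 2 * t) t := by
      have := ((hasDerivAt_pow 2 t).const_mul (L / 2 * ‖u‖ ^ 2))
      exact this.congr_deriv (by push_cast; ring)
    exact (h1.sub h2).sub h3
  have hanti : AntitoneOn ψ (Icc (0:ℝ) 1) := by
    apply antitoneOn_of_deriv_nonpos (convex_Icc 0 1)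
    · exact fun t _ => ((hder t).continuousAt).continuousWithinAt
    · intro t ht
      exact ((hder t).differentiableAt).differentiableWithinAt
    · intro t ht
      rw [interior_Icc] at ht
      rw [(hder t).deriv]
      have hbound : ⟪gradient f (a + t • u) - gradient f a, u⟫ ≤ L * t * ‖u‖ ^ 2 := by
        calc ⟪gradient f (a + t • u) - gradient f a, u⟫
            ≤ ‖gradient f (a + t • u) - gradient f a‖ * ‖u‖ := real_inner_le_norm _ _
          _ ≤ L * ‖(a + t • u) - a‖ * ‖u‖ := by
              have := hlip (a + t • u) a
              have hn : (0:ℝ) ≤ ‖u‖ := norm_nonneg _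
              nlinarith [norm_nonneg (gradient f (a + t • u) - gradient f a)]
          _ = L * t * ‖u‖ ^ 2 := by
              rw [add_sub_cancel_left, norm_smul, Real.norm_eq_abs, abs_of_pos ht.1]; ring
      rw [inner_sub_left] at hbound
      linarith
  have h01 := hanti (left_mem_Icc.2 zero_le_one) (right_mem_Icc.2 zero_le_one) zero_le_one
  simp only [hψ, zero_smul, add_zero, one_smul, zero_mul, sub_zero, mul_zero, one_pow, mul_one,
    zero_pow] at h01
  have hab : a + u = b := by rw [hu]; abel
  rw [hab] at h01
  linarith

lemma nsa_step_real (η p t k F' Fk D1 D2 G P Q W S S' : ℝ)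
    (hη : 0 < η) (hp : 3 ≤ p) (hk : 0 ≤ k) (ht : t = k + p)
    (hF' : 0 ≤ F') (hG : 0 ≤ G)
    (h1 : F' ≤ D2 - 2 * η / 3 * G)
    (h2 : S' = S - 2 * (η * t / p) * W + (η * t / p) ^ 2 * G)
    (h3 : p * W = (t - p) * P + p * Q)
    (h4 : D1 ≤ P) (h5 : D2 ≤ Q)
    (h6 : D2 - D1 = Fk) :
    (k + 1) * ((k + 1) + p) / p ^ 2 * F' + S' / (2 * η) + η / 6 * (t ^ 2 / p ^ 2) * G ≤
      k * t / p ^ 2 * Fk + S / (2 * η) := by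
  have hp0 : (0:ℝ) < p := by linarith
  have h2ηp2 : (0:ℝ) < 2 * η * p ^ 2 := by positivity
  have hnum : 2 * η * (k + 1) * ((k + 1) + p) * F' + p ^ 2 * S' + η ^ 2 / 3 * t ^ 2 * G -
      (2 * η * k * t * Fk + p ^ 2 * S) ≤ 0 := by
    subst ht h6
    have hS' : p ^ 2 * S' = p ^ 2 * S - 2 * η * (k + p) * ((k + p - p) * P + p * Q) +
        η ^ 2 * (k + p) ^ 2 * G := by
      rw [h2, ← h3]; field_simp
    nlinarith [mul_le_mul_of_nonneg_left h1 (by positivity : (0:ℝ) ≤ 2 * η * (k + p) ^ 2),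
      mul_le_mul_of_nonneg_left h4 (by positivity : (0:ℝ) ≤ 2 * η * (k + p) * k),
      mul_le_mul_of_nonneg_left h5 (by positivity : (0:ℝ) ≤ 2 * η * (k + p) * p),
      mul_nonneg (mul_nonneg (le_of_lt hη) hF')
        (by nlinarith : (0:ℝ) ≤ (k + p) ^ 2 - (k + 1) * ((k + 1) + p))]
  have hfin : (k + 1) * ((k + 1) + p) / p ^ 2 * F' + S' / (2 * η) +
      η / 6 * (t ^ 2 / p ^ 2) * G - (k * t / p ^ 2 * Fk + S / (2 * η)) =
      (2 * η * (k + 1) * ((k + 1) + p) * F' + p ^ 2 * S' + η ^ 2 / 3 * t ^ 2 * G -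
        (2 * η * k * t * Fk + p ^ 2 * S)) / (2 * η * p ^ 2) := by
    field_simp
    ring
  have := div_nonpos_of_nonpos_of_nonneg hnum (le_of_lt h2ηp2)
  rw [← hfin] at this
  linarith

noncomputable def lll (x : ℝ) : ℝ := Real.log (Real.log (Real.log x))

lemma log_gt_one_of_16 {x : ℝ} (hx : 16 ≤ x) : 1 < Real.log x := by
  have hx0 : (0:ℝ) < x := by linarith
  rw [Real.lt_log_iff_exp_lt hx0]
  have := Real.exp_one_lt_d9
  linarith

lemma loglog_pos_of_16 {x : ℝ} (hx : 16 ≤ x) : 0 < Real.log (Real.log x) :=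
  Real.log_pos (log_gt_one_of_16 hx)

lemma lll_hasDerivAt {x : ℝ} (hx : 16 ≤ x) :
    HasDerivAt lll ((Real.log (Real.log x))⁻¹ * ((Real.log x)⁻¹ * x⁻¹)) x := by
  have hx0 : (0:ℝ) < x := by linarith
  have h1 : (1:ℝ) < Real.log x := log_gt_one_of_16 hx
  have h2 : 0 < Real.log (Real.log x) := loglog_pos_of_16 hx
  have d1 : HasDerivAt Real.log x⁻¹ x := Real.hasDerivAt_log (ne_of_gt hx0)
  have d2 : HasDerivAt Real.log (Real.log x)⁻¹ (Real.log x) :=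
    Real.hasDerivAt_log (by linarith)
  have d3 : HasDerivAt Real.log (Real.log (Real.log x))⁻¹ (Real.log (Real.log x)) :=
    Real.hasDerivAt_log (ne_of_gt h2)
  have := d3.comp x (d2.comp x d1)
  exact this

lemma lll_prod_pos {x : ℝ} (hx : 16 ≤ x) : 0 < x * Real.log x * Real.log (Real.log x) := by
  have := log_gt_one_of_16 hx
  have := loglog_pos_of_16 hx
  have : (0:ℝ) < x := by linarith
  positivity

lemma lll_diff_le {k : ℝ} (hk : 16 ≤ k) :
    lll (k + 1) - lll k ≤ 1 / (k * Real.log k * Real.log (Real.log k)) := by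
  obtain ⟨c, hc, heq⟩ := exists_hasDerivAt_eq_slope lll
    (fun x => (Real.log (Real.log x))⁻¹ * ((Real.log x)⁻¹ * x⁻¹))
    (by linarith : k < k + 1)
    (fun x hx => ((lll_hasDerivAt (by simp at hx; linarith [hx.1] : (16:ℝ) ≤ x)).continuousAt).continuousWithinAt)
    (fun x hx => lll_hasDerivAt (by linarith [hx.1]))
  have hck : 16 ≤ c := by linarith [hc.1]
  have h1 : (Real.log (Real.log c))⁻¹ * ((Real.log c)⁻¹ * c⁻¹) =
      1 / (c * Real.log c * Real.log (Real.log c)) := by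
    field_simp
  rw [h1] at heq
  have h2 : (lll (k + 1) - lll k) / (k + 1 - k) = lll (k + 1) - lll k := by
    norm_num
  rw [h2] at heq
  rw [← heq]
  apply one_div_le_one_div_of_le (lll_prod_pos hk)
  have hlk : 0 < Real.log k := by linarith [log_gt_one_of_16 hk]
  have hllk : 0 < Real.log (Real.log k) := loglog_pos_of_16 hk
  have hlc : Real.log k ≤ Real.log c := Real.log_le_log (by linarith) (le_of_lt hc.1)
  have hllc : Real.log (Real.log k) ≤ Real.log (Real.log c) :=
    Real.log_le_log hlk hlc
  have hk0 : (0:ℝ) < k := by linarith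
  have := hc.1
  have hc1 : k ≤ c := le_of_lt hc.1
  have hlc0 : 0 < Real.log c := by linarith
  have hc0 : (0:ℝ) < c := by linarith
  exact mul_le_mul (mul_le_mul hc1 hlc hlk.le hc0.le) hllc hllk.le (by positivity)

lemma lll_diff_nonneg {k : ℝ} (hk : 16 ≤ k) : 0 ≤ lll (k + 1) - lll k := by
  have h1 : Real.log k ≤ Real.log (k + 1) := Real.log_le_log (by linarith) (by linarith)
  have h2 : Real.log (Real.log k) ≤ Real.log (Real.log (k + 1)) :=
    Real.log_le_log (by linarith [log_gt_one_of_16 hk]) h1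
  have h3 : Real.log (Real.log (Real.log k)) ≤ Real.log (Real.log (Real.log (k + 1))) :=
    Real.log_le_log (loglog_pos_of_16 hk) h2
  simp only [lll]; linarith

lemma lll_tendsto : Tendsto lll atTop atTop :=
  Real.tendsto_log_atTop.comp (Real.tendsto_log_atTop.comp Real.tendsto_log_atTop)

lemma freq_small (G : ℕ → ℝ) (hG : ∀ k, 0 ≤ G k)
    (hsum : Summable fun k : ℕ => (k : ℝ) ^ 2 * G k) {ε : ℝ} (hε : 0 < ε) :
    ∃ᶠ k : ℕ in atTop, (k : ℝ) ^ 3 * Real.log k * Real.log (Real.log k) * G k ≤ ε := by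
  by_contra hcon
  rw [not_frequently] at hcon
  simp only [not_le] at hcon
  obtain ⟨N, hN⟩ := eventually_atTop.1 hcon
  set M := max N 16 with hM
  have key : ∀ j : ℕ, ε * (lll (((j + M : ℕ) : ℝ) + 1) - lll ((j + M : ℕ) : ℝ)) ≤
      ((j + M : ℕ) : ℝ) ^ 2 * G (j + M) := by
    intro j
    set k := j + M with hk
    have hk16 : (16 : ℝ) ≤ (k : ℝ) := by
      have : 16 ≤ k := le_trans (le_max_right N 16) (Nat.le_add_left M j)
      exact_mod_cast this
    have hu : ε < (k : ℝ) ^ 3 * Real.log k * Real.log (Real.log k) * G k :=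
      hN k (le_trans (le_max_left N 16) (Nat.le_add_left M j))
    have hd : 0 < (k : ℝ) * Real.log k * Real.log (Real.log k) := lll_prod_pos hk16
    have h2 : ε / ((k : ℝ) * Real.log k * Real.log (Real.log k)) ≤ (k : ℝ) ^ 2 * G k := by
      rw [div_le_iff₀ hd]
      nlinarith
    have h3 : ε * (lll ((k : ℝ) + 1) - lll (k : ℝ)) ≤
        ε / ((k : ℝ) * Real.log k * Real.log (Real.log k)) := by
      have := mul_le_mul_of_nonneg_left (lll_diff_le hk16) hε.le
      calc ε * (lll ((k : ℝ) + 1) - lll (k : ℝ))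
          ≤ ε * (1 / ((k : ℝ) * Real.log k * Real.log (Real.log k))) := this
        _ = ε / ((k : ℝ) * Real.log k * Real.log (Real.log k)) := by ring
    linarith
  have hsum1 : Summable (fun j => ((j + M : ℕ) : ℝ) ^ 2 * G (j + M)) :=
    (summable_nat_add_iff M).2 hsum
  have hsum2 : Summable (fun j => ε * (lll (((j + M : ℕ) : ℝ) + 1) - lll ((j + M : ℕ) : ℝ))) := by
    apply hsum1.of_nonneg_of_le (fun j => ?_) key
    apply mul_nonneg hε.le
    apply lll_diff_nonneg
    have : 16 ≤ j + M := le_trans (le_max_right N 16) (Nat.le_add_left M j)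
    exact_mod_cast this
  have hsum3 : Summable (fun j => lll (((j + M : ℕ) : ℝ) + 1) - lll ((j + M : ℕ) : ℝ)) := by
    simpa [inv_mul_cancel_left₀ hε.ne'] using hsum2.mul_left ε⁻¹
  set g : ℕ → ℝ := fun j => lll ((j + M : ℕ) : ℝ) with hg
  have hgeq : (fun j => lll (((j + M : ℕ) : ℝ) + 1) - lll ((j + M : ℕ) : ℝ)) =
      fun j => g (j + 1) - g j := by
    funext j
    simp only [hg]
    congr 2
    push_cast
    ring
  rw [hgeq] at hsum3
  have hT : Tendsto (fun m => g m - g 0) atTop (𝓝 (∑' j, (g (j + 1) - g j))) := by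
    exact (hsum3.hasSum.tendsto_sum_nat).congr (fun m => Finset.sum_range_sub g m)
  have hgT : Tendsto g atTop atTop := by
    apply lll_tendsto.comp
    apply tendsto_natCast_atTop_atTop.comp
    exact tendsto_add_atTop_nat M
  have hgT2 : Tendsto (fun m => g m - g 0) atTop atTop :=
    tendsto_atTop_add_const_right atTop (-(g 0)) hgT |>.congr (fun m => by ring)
  exact not_tendsto_atTop_of_tendsto_nhds hT hgT2

end NSAAux

set_option maxHeartbeats 2000000 in
theorem nsa_stmt_8 (n : ℕ) (hn : 1 ≤ n)
    (f : EuclideanSpace ℝ (Fin n) → ℝ)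
    (hconv : ConvexOn ℝ Set.univ f)
    (hdiff : Differentiable ℝ f)
    (L : ℝ) (hL : 0 < L)
    (hlip : ∀ x x' : EuclideanSpace ℝ (Fin n),
      ‖gradient f x - gradient f x'‖ ≤ L * ‖x - x'‖)
    (xstar : EuclideanSpace ℝ (Fin n)) (hmin : ∀ u, f xstar ≤ f u)
    (p : ℝ) (hp : 3 ≤ p)
    (η : ℝ) (hη0 : 0 < η) (hη : η ≤ 2 / (3 * L))
    (α : ℕ → ℝ) (hα : ∀ k : ℕ, α k = p / (k + p))
    (x y z : ℕ → EuclideanSpace ℝ (Fin n))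
    (hx0 : x 0 = z 0)
    (hy : ∀ k, y k = (1 - α k) • x k + α k • z k)
    (hx : ∀ k, x (k + 1) =
      if f (y k - η • gradient f (y k)) ≤ f (x k - η • gradient f (x k))
      then y k - η • gradient f (y k)
      else x k - η • gradient f (x k))
    (hz : ∀ k, z (k + 1) = z k - (η / α k) • gradient f (y k))
    :
    Filter.liminf
      (fun k : ℕ =>
        (k : ℝ) ^ 3 * Real.log k * Real.log (Real.log k) * ‖gradient f (y k)‖ ^ 2)
      Filter.atTop = 0 := by
  have hp0 : (0 : ℝ) < p := by linarith
  have hLη : L * η ≤ 2 / 3 := by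
    rw [le_div_iff₀ (by positivity : (0:ℝ) < 3 * L)] at hη
    linarith
  set G : ℕ → ℝ := fun k => ‖gradient f (y k)‖ ^ 2 with hG
  have hGnn : ∀ k, 0 ≤ G k := fun k => by positivity
  set V : ℕ → ℝ := fun k =>
    (k : ℝ) * ((k : ℝ) + p) / p ^ 2 * (f (x k) - f xstar) + ‖z k - xstar‖ ^ 2 / (2 * η)
    with hV
  -- the per-step Lyapunov inequality
  have hstep : ∀ k : ℕ, V (k + 1) + η / 6 * (((k : ℝ) + p) ^ 2 / p ^ 2) * G k ≤ V k := by
    intro k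
    set v := gradient f (y k) with hv
    have htpos : (0 : ℝ) < (k : ℝ) + p := by positivity
    have htne : ((k : ℝ) + p) ≠ 0 := ne_of_gt htpos
    -- h1 : descent
    have hx1 : f (x (k + 1)) ≤ f (y k - η • v) := by
      rw [hx k]
      split_ifs with h
      · exact le_refl _
      · exact le_of_lt (not_le.1 h)
    have hdes := descent_lemma f hdiff L hL hlip (y k) (y k - η • v)
    have hsub : y k - η • v - y k = -(η • v) := by abel
    rw [hsub] at hdes
    have hinner1 : ⟪v, -(η • v)⟫ = -(η * ‖v‖ ^ 2) := by
      rw [inner_neg_right, real_inner_smul_right, real_inner_self_eq_norm_sq]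
    have hnorm1 : ‖-(η • v)‖ ^ 2 = η ^ 2 * ‖v‖ ^ 2 := by
      rw [norm_neg, norm_smul, Real.norm_eq_abs, abs_of_pos hη0, mul_pow]
    rw [hinner1, hnorm1] at hdes
    have h1 : f (x (k + 1)) - f xstar ≤ (f (y k) - f xstar) - 2 * η / 3 * G k := by
      have hGk : G k = ‖v‖ ^ 2 := rfl
      nlinarith [hGnn k]
    -- h2 : expansion of z step
    have hzsub : z (k + 1) - xstar = (z k - xstar) - (η * ((k : ℝ) + p) / p) • v := by
      rw [hz k, hα k]
      have : η / (p / ((k : ℝ) + p)) = η * ((k : ℝ) + p) / p := by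
        field_simp
      rw [this]
      abel
    have h2 : ‖z (k + 1) - xstar‖ ^ 2 = ‖z k - xstar‖ ^ 2
        - 2 * (η * ((k : ℝ) + p) / p) * ⟪v, z k - xstar⟫
        + (η * ((k : ℝ) + p) / p) ^ 2 * G k := by
      rw [hzsub, norm_sub_sq_real, real_inner_smul_right, norm_smul, Real.norm_eq_abs,
        mul_pow, sq_abs, real_inner_comm]
      ring_nf
      rfl
    -- h3 : decomposition of z k - xstar
    have hvec : α k • (z k - xstar) = (1 - α k) • (y k - x k) + α k • (y k - xstar) := by
      have hyk := hy k
      rw [smul_sub, smul_sub, smul_sub]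
      rw [sub_smul, one_smul]
      have : α k • z k = y k - (1 - α k) • x k := by rw [hyk]; abel
      rw [this]
      abel
    have h3' := congrArg (fun w => ⟪v, w⟫) hvec
    simp only [inner_add_right, real_inner_smul_right] at h3'
    have harith : ∀ A B C : ℝ, α k * C = (1 - α k) * A + α k * B →
        p * C = (((k : ℝ) + p) - p) * A + p * B := by
      intro A B C h
      rw [hα k] at h
      field_simp at h
      linarith
    have h3 := harith ⟪v, y k - x k⟫ ⟪v, y k - xstar⟫ ⟪v, z k - xstar⟫ h3'
    -- h4, h5 : convexity
    have h4 : f (y k) - f (x k) ≤ ⟪v, y k - x k⟫ := by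
      have := convex_grad_ineq f hconv hdiff (y k) (x k)
      have hh : x k - y k = -(y k - x k) := by abel
      rw [hh, inner_neg_right] at this
      linarith
    have h5 : f (y k) - f xstar ≤ ⟪v, y k - xstar⟫ := by
      have := convex_grad_ineq f hconv hdiff (y k) xstar
      have hh : xstar - y k = -(y k - xstar) := by abel
      rw [hh, inner_neg_right] at this
      linarith
    have hmain := nsa_step_real η p ((k : ℝ) + p) (k : ℝ)
      (f (x (k + 1)) - f xstar) (f (x k) - f xstar)
      (f (y k) - f (x k)) (f (y k) - f xstar) (G k)
      ⟪v, y k - x k⟫ ⟪v, y k - xstar⟫ ⟪v, z k - xstar⟫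
      (‖z k - xstar‖ ^ 2) (‖z (k + 1) - xstar‖ ^ 2)
      hη0 hp (Nat.cast_nonneg k) rfl (sub_nonneg.2 (hmin _)) (hGnn k)
      h1 h2 h3 h4 h5 (by ring)
    simp only [hV]
    push_cast
    linarith [hmain]
  -- partial sums bounded
  have hVnn : ∀ N : ℕ, 0 ≤ V N := by
    intro N
    apply add_nonneg
    · apply mul_nonneg
      · positivity
      · exact sub_nonneg.2 (hmin _)
    · positivity
  have hsums : ∀ N : ℕ, ∑ k ∈ Finset.range N, η / 6 * (((k : ℝ) + p) ^ 2 / p ^ 2) * G k ≤ V 0 := by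
    intro N
    have key : ∀ N : ℕ, V N + ∑ k ∈ Finset.range N,
        η / 6 * (((k : ℝ) + p) ^ 2 / p ^ 2) * G k ≤ V 0 := by
      intro N
      induction N with
      | zero => simp
      | succ N ih =>
        rw [Finset.sum_range_succ]
        have := hstep N
        linarith
    exact le_trans (le_add_of_nonneg_left (hVnn N)) (key N)
  have hsumbig : Summable (fun k : ℕ => η / 6 * (((k : ℝ) + p) ^ 2 / p ^ 2) * G k) := by
    apply summable_of_sum_range_le (c := V 0)
    · intro k
      positivity
    · exact hsums
  have hsumsq : Summable (fun k : ℕ => (k : ℝ) ^ 2 * G k) := by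
    have h6 : Summable (fun k : ℕ => 6 * p ^ 2 / η * (η / 6 * (((k : ℝ) + p) ^ 2 / p ^ 2) * G k)) :=
      hsumbig.mul_left _
    apply h6.of_nonneg_of_le
    · intro k; positivity
    · intro k
      have he : 6 * p ^ 2 / η * (η / 6 * (((k : ℝ) + p) ^ 2 / p ^ 2) * G k) =
          ((k : ℝ) + p) ^ 2 * G k := by
        field_simp
      rw [he]
      apply mul_le_mul_of_nonneg_right _ (hGnn k)
      nlinarith [(Nat.cast_nonneg k : (0:ℝ) ≤ (k:ℝ))]
  -- frequently small
  have hfreq : ∀ ε : ℝ, 0 < ε → ∃ᶠ k : ℕ in atTop,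
      (k : ℝ) ^ 3 * Real.log k * Real.log (Real.log k) * ‖gradient f (y k)‖ ^ 2 ≤ ε :=
    fun ε hε => freq_small G hGnn hsumsq hε
  -- eventually nonneg
  have hevnn : ∀ᶠ k : ℕ in atTop,
      0 ≤ (k : ℝ) ^ 3 * Real.log k * Real.log (Real.log k) * ‖gradient f (y k)‖ ^ 2 := by
    rw [eventually_atTop]
    refine ⟨3, fun k hk => ?_⟩
    have hk3 : (3 : ℝ) ≤ (k : ℝ) := by exact_mod_cast hk
    have hlog1 : 1 ≤ Real.log k := by
      rw [Real.le_log_iff_exp_le (by linarith)]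
      have := Real.exp_one_lt_d9
      linarith
    have h1 : 0 ≤ Real.log k := by linarith
    have h2 : 0 ≤ Real.log (Real.log k) := Real.log_nonneg hlog1
    positivity
  apply le_antisymm
  · -- liminf ≤ 0
    by_contra hcon
    push_neg at hcon
    set c := Filter.liminf
      (fun k : ℕ =>
        (k : ℝ) ^ 3 * Real.log k * Real.log (Real.log k) * ‖gradient f (y k)‖ ^ 2)
      Filter.atTop with hc
    have hle : c ≤ c / 2 := by
      exact Filter.liminf_le_of_frequently_le (hfreq (c / 2) (by linarith))
        (isBoundedUnder_of_eventually_ge hevnn)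
    linarith
  · -- 0 ≤ liminf
    exact Filter.le_liminf_of_le
      (Filter.IsCoboundedUnder.of_frequently_le (hfreq 1 one_pos)) hevnn
end

section
/- Along the continuous-time NSA dynamics, for every 0 < t₀ ≤ t one has f(X(t)) − f* ≤ E(t₀)/t², where E(t₀) = (p²/2)·‖Z(t₀) − x*‖² + t₀²·(f(X(t₀)) − f*). In particular f(X(t)) − f* = O(1/t²) as t → ∞. -/
open scoped RealInnerProductSpace

/-- Gradient inequality for convex differentiable functions. -/
lemma nsa_grad_ineq {n : ℕ} (f : EuclideanSpace ℝ (Fin n) → ℝ)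
    (hconv : ConvexOn ℝ Set.univ f) (hdiff : Differentiable ℝ f)
    (x y : EuclideanSpace ℝ (Fin n)) :
    f x + ⟪gradient f x, y - x⟫ ≤ f y := by
  set g : ℝ → ℝ := fun s => f (AffineMap.lineMap x y s) with hg
  have hgc : ConvexOn ℝ Set.univ g := by
    have := hconv.comp_affineMap (AffineMap.lineMap x y)
    simpa [Function.comp_def] using this
  have hc : HasDerivAt (fun s : ℝ => (AffineMap.lineMap x y s : EuclideanSpace ℝ (Fin n)))
      (y - x) 0 := by
    have heq : (fun s : ℝ => (AffineMap.lineMap x y s : EuclideanSpace ℝ (Fin n)))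
        = fun s : ℝ => s • (y - x) + x := by
      funext s
      simp only [AffineMap.lineMap_apply, vsub_eq_sub, vadd_eq_add]
    rw [heq]
    simpa using ((hasDerivAt_id (0:ℝ)).smul_const (y - x)).add_const x
  have hfd : HasFDerivAt f ((InnerProductSpace.toDual ℝ _) (gradient f x))
      ((AffineMap.lineMap x y : ℝ →ᵃ[ℝ] _) (0:ℝ)) := by
    have := hasGradientAt_iff_hasFDerivAt.mp (hdiff x).hasGradientAt
    simpa [AffineMap.lineMap_apply_module] using this
  have hd : HasDerivAt g ⟪gradient f x, y - x⟫ 0 := by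
    have := hfd.comp_hasDerivAt (0:ℝ) hc
    simpa [InnerProductSpace.toDual_apply_apply, hg, Function.comp_def] using this
  have := hgc.le_slope_of_hasDerivAt (Set.mem_univ (0:ℝ)) (Set.mem_univ (1:ℝ)) one_pos hd
  have hslope : slope g 0 1 = f y - f x := by
    simp [slope, hg, AffineMap.lineMap_apply_module]
  rw [hslope] at this
  linarith

/-- Along the continuous-time NSA dynamics, for `0 < t₀ ≤ t`,
`f(X(t)) - f* ≤ E(t₀) / t²` where
`E(t₀) = (p²/2)‖Z(t₀) - x*‖² + t₀²(f(X(t₀)) - f*)`. -/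
theorem nsa_stmt_15 (n : ℕ) (hn : 1 ≤ n)
    (f : EuclideanSpace ℝ (Fin n) → ℝ)
    (hconv : ConvexOn ℝ Set.univ f)
    (hdiff : ContDiff ℝ 1 f)
    (xstar : EuclideanSpace ℝ (Fin n)) (hmin : ∀ u, f xstar ≤ f u)
    (p c : ℝ) (hp : 2 ≤ p) (hc : 0 < c)
    (X Z X' Z' : ℝ → EuclideanSpace ℝ (Fin n))
    (hX : ∀ t : ℝ, 0 < t → HasDerivAt X (X' t) t)
    (hZ : ∀ t : ℝ, 0 < t → HasDerivAt Z (Z' t) t)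
    (hode1 : ∀ t : ℝ, 0 < t →
      t • X' t + p • (X t - Z t) + (c * t) • gradient f (X t) = 0)
    (hode2 : ∀ t : ℝ, 0 < t →
      Z' t + (t / p) • gradient f (X t) = 0) :
    ∀ t₀ t : ℝ, 0 < t₀ → t₀ ≤ t →
      f (X t) - f xstar ≤
        (p ^ 2 / 2 * ‖Z t₀ - xstar‖ ^ 2 + t₀ ^ 2 * (f (X t₀) - f xstar)) / t ^ 2 := by
  intro t₀ t ht₀ ht₀t
  have hpd : Differentiable ℝ f := hdiff.differentiable one_ne_zero
  have hppos : (0:ℝ) < p := by linarith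
  set E : ℝ → ℝ := fun s =>
    p ^ 2 / 2 * ‖Z s - xstar‖ ^ 2 + s ^ 2 * (f (X s) - f xstar) with hE
  -- derivative expression
  set D : ℝ → ℝ := fun s =>
    p ^ 2 / 2 * (⟪Z s - xstar, Z' s⟫ + ⟪Z' s, Z s - xstar⟫)
      + ((2 * s) * (f (X s) - f xstar) + s ^ 2 * ⟪gradient f (X s), X' s⟫) with hD
  have hEderiv : ∀ s : ℝ, 0 < s → HasDerivAt E (D s) s := by
    intro s hs
    have h1 : HasDerivAt (fun u => ‖Z u - xstar‖ ^ 2)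
        (⟪Z s - xstar, Z' s⟫ + ⟪Z' s, Z s - xstar⟫) s := by
      have heq : (fun u => ‖Z u - xstar‖ ^ 2)
          = fun u => ⟪Z u - xstar, Z u - xstar⟫ := by
        funext u; rw [real_inner_self_eq_norm_sq]
      rw [heq]
      exact ((hZ s hs).sub_const xstar).inner ℝ ((hZ s hs).sub_const xstar)
    have h2 : HasDerivAt (fun u => f (X u)) ⟪gradient f (X s), X' s⟫ s := by
      have hfd : HasFDerivAt f ((InnerProductSpace.toDual ℝ _) (gradient f (X s))) (X s) :=
        hasGradientAt_iff_hasFDerivAt.mp (hpd (X s)).hasGradientAt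
      have := hfd.comp_hasDerivAt s (hX s hs)
      simpa [InnerProductSpace.toDual_apply_apply, Function.comp_def] using this
    have h3 : HasDerivAt (fun u : ℝ => u ^ 2 * (f (X u) - f xstar))
        ((2 * s) * (f (X s) - f xstar) + s ^ 2 * ⟪gradient f (X s), X' s⟫) s := by
      have := (hasDerivAt_pow 2 s).mul (h2.sub_const (f xstar))
      simpa [mul_comm, Pi.mul_def] using this
    exact ((h1.const_mul (p ^ 2 / 2)).add h3 :)
  have hDnonpos : ∀ s : ℝ, 0 < s → D s ≤ 0 := by
    intro s hs
    set g := gradient f (X s) with hgdef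
    have hz' : Z' s = -((s / p) • g) := by
      have := hode2 s hs
      rw [add_eq_zero_iff_eq_neg] at this
      exact this
    have hx' : s • X' s = -(p • (X s - Z s)) - (c * s) • g := by
      have := hode1 s hs
      have h' : s • X' s + (p • (X s - Z s) + (c * s) • g) = 0 := by
        rw [← add_assoc]; exact this
      rw [add_eq_zero_iff_eq_neg] at h'
      rw [h']; abel
    have hiz : ⟪Z' s, Z s - xstar⟫ = -((s / p) * ⟪g, Z s - xstar⟫) := by
      rw [hz', inner_neg_left, real_inner_smul_left]
    have h0 : ⟪Z s - xstar, Z' s⟫ = -((s / p) * ⟪g, Z s - xstar⟫) := by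
      rw [real_inner_comm]; exact hiz
    have hA : p ^ 2 / 2 * (⟪Z s - xstar, Z' s⟫ + ⟪Z' s, Z s - xstar⟫)
        = -(p * s) * ⟪g, Z s - xstar⟫ := by
      rw [h0, hiz]
      field_simp
      ring
    have hix : s ^ 2 * ⟪g, X' s⟫ = s * (-(p * ⟪g, X s - Z s⟫) - (c * s) * ⟪g, g⟫) := by
      have : s * ⟪g, X' s⟫ = ⟪g, s • X' s⟫ := (real_inner_smul_right g (X' s) s).symm
      have h2 : ⟪g, s • X' s⟫ = -(p * ⟪g, X s - Z s⟫) - (c * s) * ⟪g, g⟫ := by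
        rw [hx', inner_sub_right, inner_neg_right, real_inner_smul_right,
          real_inner_smul_right]
      calc s ^ 2 * ⟪g, X' s⟫ = s * (s * ⟪g, X' s⟫) := by ring
        _ = s * (-(p * ⟪g, X s - Z s⟫) - (c * s) * ⟪g, g⟫) := by rw [this, h2]
    have hsum : ⟪g, Z s - xstar⟫ + ⟪g, X s - Z s⟫ = ⟪g, X s - xstar⟫ := by
      rw [← inner_add_right]
      congr 1
      abel
    have hconvineq : f (X s) - f xstar ≤ ⟪g, X s - xstar⟫ := by
      have := nsa_grad_ineq f hconv hpd (X s) xstar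
      have h' : ⟪g, xstar - X s⟫ = -⟪g, X s - xstar⟫ := by
        rw [← inner_neg_right]; congr 1; abel
      rw [hgdef]; linarith [this, h'.symm.le]
    have hmin' : 0 ≤ f (X s) - f xstar := by linarith [hmin (X s)]
    have hgg : 0 ≤ ⟪g, g⟫ := real_inner_self_nonneg
    have hDval : D s = -(p * s) * ⟪g, X s - xstar⟫ + 2 * s * (f (X s) - f xstar)
        - c * s ^ 2 * ⟪g, g⟫ := by
      rw [hD]
      dsimp only
      have hge : gradient f (X s) = g := rfl
      rw [hge, hA, hix]
      linear_combination (-(p * s)) * hsum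
    rw [hDval]
    nlinarith [mul_le_mul_of_nonneg_left hconvineq (le_of_lt (mul_pos hppos hs)),
      mul_nonneg (mul_nonneg (by linarith : (0:ℝ) ≤ p - 2) hs.le) hmin',
      mul_nonneg (mul_nonneg hc.le (sq_nonneg s)) hgg]
  -- E is antitone on [t₀, t]
  have hsub : Set.Icc t₀ t ⊆ Set.Ioi (0:ℝ) := fun x hx => lt_of_lt_of_le ht₀ hx.1
  have hanti : AntitoneOn E (Set.Icc t₀ t) := by
    apply antitoneOn_of_deriv_nonpos (convex_Icc t₀ t)
    · intro x hx
      exact (hEderiv x (hsub hx)).continuousAt.continuousWithinAt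
    · intro x hx
      have hx' : x ∈ Set.Icc t₀ t := interior_subset hx
      exact (hEderiv x (hsub hx')).differentiableAt.differentiableWithinAt
    · intro x hx
      have hx' : x ∈ Set.Icc t₀ t := interior_subset hx
      rw [(hEderiv x (hsub hx')).deriv]
      exact hDnonpos x (hsub hx')
  have hEle : E t ≤ E t₀ :=
    hanti (Set.left_mem_Icc.mpr ht₀t) (Set.right_mem_Icc.mpr ht₀t) ht₀t
  have htpos : (0:ℝ) < t := lt_of_lt_of_le ht₀ ht₀t
  have ht2 : (0:ℝ) < t ^ 2 := by positivity
  rw [le_div_iff₀ ht2]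
  have hnorm : (0:ℝ) ≤ p ^ 2 / 2 * ‖Z t - xstar‖ ^ 2 := by positivity
  have key : p ^ 2 / 2 * ‖Z t - xstar‖ ^ 2 + t ^ 2 * (f (X t) - f xstar)
      ≤ p ^ 2 / 2 * ‖Z t₀ - xstar‖ ^ 2 + t₀ ^ 2 * (f (X t₀) - f xstar) := hEle
  rw [mul_comm]
  linarith [key, hnorm]
end
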